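/- Let h > 0 be real and l ∈ ℂ such that l ∉ ℤ + (2πi/h)ℤ, i.e. l ≠ n + (2πi/h)m for all integers n, m (equivalently, sinh((k∓l)h/2) ≠ 0 for every k ∈ ℤ). Let V^{(l)} be the space of finitely supported functions ℤ → ℂ with basis (e_k), equipped with the operators X⁺ e_k = (sinh((k−l)h/2)/sinh(h/2)) e_{k+1}, X⁻ e_k = −(sinh((k+l)h/2)/sinh(h/2)) e_{k−1}, H e_k = 2k e_k. Then V^{(l)} is a simple module: every ℂ-linear subspace W ⊆ V^{(l)} that is invariant under X⁺, X⁻ and H is either {0} or all of V^{(l)}. -/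

import Mathlib

/-- The operator `X⁺ e_k = (sinh((k−l)h/2)/sinh(h/2)) e_{k+1}` on `V^{(l)} = ℤ →₀ ℂ`. -/
noncomputable def Xplus (h : ℝ) (l : ℂ) : (ℤ →₀ ℂ) →ₗ[ℂ] (ℤ →₀ ℂ) :=
  Finsupp.lsum ℂ fun k =>
    (Complex.sinh (((k : ℂ) - l) * h / 2) / Complex.sinh (h / 2)) • Finsupp.lsingle (k + 1)

/-- The operator `X⁻ e_k = −(sinh((k+l)h/2)/sinh(h/2)) e_{k−1}` on `V^{(l)} = ℤ →₀ ℂ`. -/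
noncomputable def Xminus (h : ℝ) (l : ℂ) : (ℤ →₀ ℂ) →ₗ[ℂ] (ℤ →₀ ℂ) :=
  Finsupp.lsum ℂ fun k =>
    (-(Complex.sinh (((k : ℂ) + l) * h / 2) / Complex.sinh (h / 2))) • Finsupp.lsingle (k - 1)

/-- The operator `H e_k = 2k e_k` on `V^{(l)} = ℤ →₀ ℂ`. -/
noncomputable def Hop : (ℤ →₀ ℂ) →ₗ[ℂ] (ℤ →₀ ℂ) :=
  Finsupp.lsum ℂ fun k => ((2 * k : ℤ) : ℂ) • Finsupp.lsingle k

lemma sinh_zero_iff' (x : ℂ) : Complex.sinh x = 0 ↔ ∃ k : ℤ, x = k * Real.pi * Complex.I := by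
  constructor
  · intro hx
    have : Complex.sin (x * Complex.I) = 0 := by rw [Complex.sin_mul_I, hx]; ring
    rw [Complex.sin_eq_zero_iff] at this
    obtain ⟨k, hk⟩ := this
    refine ⟨-k, ?_⟩
    push_cast
    have hI : x * Complex.I * Complex.I = (k:ℂ) * Real.pi * Complex.I := by rw [hk]
    rw [mul_assoc, Complex.I_mul_I] at hI
    linear_combination -hI
  · rintro ⟨k, rfl⟩
    rw [show (k:ℂ) * Real.pi * Complex.I = ((k:ℂ) * Real.pi) * Complex.I from rfl,
      Complex.sinh_mul_I, Complex.sin_int_mul_pi, zero_mul]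

lemma Xplus_single (h : ℝ) (l : ℂ) (k : ℤ) (c : ℂ) :
    Xplus h l (Finsupp.single k c) =
      Finsupp.single (k + 1) ((Complex.sinh (((k : ℂ) - l) * h / 2) / Complex.sinh (h / 2)) * c) := by
  rw [Xplus, Finsupp.lsum_single, LinearMap.smul_apply, Finsupp.lsingle_apply,
    Finsupp.smul_single, smul_eq_mul]

lemma Xminus_single (h : ℝ) (l : ℂ) (k : ℤ) (c : ℂ) :
    Xminus h l (Finsupp.single k c) =
      Finsupp.single (k - 1) ((-(Complex.sinh (((k : ℂ) + l) * h / 2) / Complex.sinh (h / 2))) * c) := by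
  rw [Xminus, Finsupp.lsum_single, LinearMap.smul_apply, Finsupp.lsingle_apply,
    Finsupp.smul_single, smul_eq_mul]

lemma Hop_single (k : ℤ) (c : ℂ) :
    Hop (Finsupp.single k c) = Finsupp.single k (((2 * k : ℤ) : ℂ) * c) := by
  rw [Hop, Finsupp.lsum_single, LinearMap.smul_apply, Finsupp.lsingle_apply,
    Finsupp.smul_single, smul_eq_mul]

lemma Hop_apply (v : ℤ →₀ ℂ) (m : ℤ) : Hop v m = ((2 * m : ℤ) : ℂ) * v m := by
  induction v using Finsupp.induction_linear with
  | zero => simp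
  | add f g hf hg => rw [map_add, Finsupp.add_apply, hf, hg, Finsupp.add_apply]; ring
  | single k c =>
    rw [Hop_single]
    by_cases hk : k = m
    · subst hk
      rw [Finsupp.single_apply, if_pos rfl, Finsupp.single_apply, if_pos rfl]
    · rw [Finsupp.single_apply, Finsupp.single_apply, if_neg hk, if_neg hk, mul_zero]

/-- coordinate extraction from an `H`-invariant subspace -/
lemma extract (W : Submodule ℂ (ℤ →₀ ℂ)) (hW : ∀ v ∈ W, Hop v ∈ W) :
    ∀ n : ℕ, ∀ v ∈ W, v.support.card = n → ∀ k : ℤ, Finsupp.single k (v k) ∈ W := by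
  intro n
  induction n using Nat.strong_induction_on with
  | _ n ih =>
    intro v hv hcard k
    by_cases h0 : v = 0
    · subst h0; simp only [Finsupp.coe_zero, Pi.zero_apply, Finsupp.single_zero]; exact W.zero_mem
    obtain ⟨j, hj⟩ := Finsupp.support_nonempty_iff.mpr h0
    set w : ℤ →₀ ℂ := Hop v - ((2 * j : ℤ) : ℂ) • v with hwdef
    have hwW : w ∈ W := W.sub_mem (hW v hv) (W.smul_mem _ hv)
    have hwk : ∀ m : ℤ, w m = ((2 * m - 2 * j : ℤ) : ℂ) * v m := by
      intro m
      rw [hwdef, Finsupp.sub_apply, Finsupp.smul_apply, Hop_apply, smul_eq_mul]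
      push_cast; ring
    have hsub : w.support ⊆ v.support.erase j := by
      intro m hm
      rw [Finsupp.mem_support_iff, hwk] at hm
      rcases mul_ne_zero_iff.mp hm with ⟨h1, h2⟩
      refine Finset.mem_erase.mpr ⟨?_, Finsupp.mem_support_iff.mpr h2⟩
      intro hmj; subst hmj; simp at h1
    have hlt : w.support.card < n := by
      calc w.support.card ≤ (v.support.erase j).card := Finset.card_le_card hsub
        _ < v.support.card := Finset.card_erase_lt_of_mem hj
        _ = n := hcard
    have hws : ∀ m : ℤ, Finsupp.single m (w m) ∈ W := ih _ hlt w hwW rfl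
    have hne : ∀ m : ℤ, m ≠ j → Finsupp.single m (v m) ∈ W := by
      intro m hm
      have hc : ((2 * m - 2 * j : ℤ) : ℂ) ≠ 0 := by
        simp only [ne_eq, Int.cast_eq_zero]; omega
      have := W.smul_mem (((2 * m - 2 * j : ℤ) : ℂ))⁻¹ (hws m)
      rwa [hwk, Finsupp.smul_single, smul_eq_mul, inv_mul_cancel_left₀ hc] at this
    by_cases hk : k = j
    · subst hk
      have hdecomp : Finsupp.single k (v k) =
          v - ∑ m ∈ v.support.erase k, Finsupp.single m (v m) := by
        have hsum : v = ∑ m ∈ v.support, Finsupp.single m (v m) := (Finsupp.sum_single v).symm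
        rw [← Finset.add_sum_erase _ _ hj] at hsum
        rw [eq_sub_iff_add_eq]
        exact hsum.symm
      rw [hdecomp]
      exact W.sub_mem hv (Submodule.sum_mem W fun m hm =>
        hne m (Finset.mem_erase.mp hm).1)
    · exact hne k hk

/-- If `l ∉ ℤ + (2πi/h)ℤ` then `V^{(l)}` is a simple module: every subspace invariant
under `X⁺`, `X⁻` and `H` is `{0}` or everything. -/
theorem Vl_simple (h : ℝ) (hh : 0 < h) (l : ℂ)
    (hl : ∀ n m : ℤ, l ≠ (n : ℂ) + (2 * Real.pi * Complex.I / h) * m) :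
    ∀ W : Submodule ℂ (ℤ →₀ ℂ),
      (∀ v ∈ W, Xplus h l v ∈ W) → (∀ v ∈ W, Xminus h l v ∈ W) →
      (∀ v ∈ W, Hop v ∈ W) → W = ⊥ ∨ W = ⊤ := by
  intro W hXp hXm hH
  by_cases hbot : W = ⊥
  · exact Or.inl hbot
  right
  have hhC : (h : ℂ) ≠ 0 := by exact_mod_cast hh.ne'
  -- nonvanishing of sinh(h/2)
  have hden : Complex.sinh ((h : ℂ) / 2) ≠ 0 := by
    rw [show (h:ℂ)/2 = ((h/2 : ℝ):ℂ) by push_cast; ring, ← Complex.ofReal_sinh]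
    have : (0:ℝ) < Real.sinh (h/2) := by
      rw [Real.sinh_pos_iff]; positivity
    exact_mod_cast this.ne'
  have hplus : ∀ k : ℤ, Complex.sinh (((k : ℂ) - l) * h / 2) ≠ 0 := by
    intro k heq
    obtain ⟨m, hm⟩ := (sinh_zero_iff' _).mp heq
    apply hl k (-m)
    push_cast
    field_simp
    field_simp at hm
    linear_combination -hm
  have hminus : ∀ k : ℤ, Complex.sinh (((k : ℂ) + l) * h / 2) ≠ 0 := by
    intro k heq
    obtain ⟨m, hm⟩ := (sinh_zero_iff' _).mp heq
    apply hl (-k) m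
    push_cast
    field_simp
    field_simp at hm
    linear_combination hm
  -- step lemmas
  have step_up : ∀ m : ℤ, Finsupp.single m (1:ℂ) ∈ W → Finsupp.single (m+1) (1:ℂ) ∈ W := by
    intro m hm
    have hX := hXp _ hm
    rw [Xplus_single, mul_one] at hX
    have hc : Complex.sinh (((m : ℂ) - l) * h / 2) / Complex.sinh (h / 2) ≠ 0 :=
      div_ne_zero (hplus m) hden
    have := W.smul_mem (Complex.sinh (((m : ℂ) - l) * h / 2) / Complex.sinh (h / 2))⁻¹ hX
    rwa [Finsupp.smul_single, smul_eq_mul, inv_mul_cancel₀ hc] at this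
  have step_down : ∀ m : ℤ, Finsupp.single m (1:ℂ) ∈ W → Finsupp.single (m-1) (1:ℂ) ∈ W := by
    intro m hm
    have hX := hXm _ hm
    rw [Xminus_single, mul_one] at hX
    have hc : -(Complex.sinh (((m : ℂ) + l) * h / 2) / Complex.sinh (h / 2)) ≠ 0 :=
      neg_ne_zero.mpr (div_ne_zero (hminus m) hden)
    have := W.smul_mem (-(Complex.sinh (((m : ℂ) + l) * h / 2) / Complex.sinh (h / 2)))⁻¹ hX
    rwa [Finsupp.smul_single, smul_eq_mul, inv_mul_cancel₀ hc] at this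
  -- get a basis vector in W
  obtain ⟨v, hvW, hvne⟩ := Submodule.exists_mem_ne_zero_of_ne_bot hbot
  obtain ⟨k0, hk0⟩ := Finsupp.support_nonempty_iff.mpr hvne
  have hk0ne : v k0 ≠ 0 := Finsupp.mem_support_iff.mp hk0
  have hsingle : Finsupp.single k0 (v k0) ∈ W :=
    extract W hH v.support.card v hvW rfl k0
  have hbase : Finsupp.single k0 (1:ℂ) ∈ W := by
    have := W.smul_mem (v k0)⁻¹ hsingle
    rwa [Finsupp.smul_single, smul_eq_mul, inv_mul_cancel₀ hk0ne] at this
  have hup : ∀ d : ℕ, Finsupp.single (k0 + (d:ℤ)) (1:ℂ) ∈ W := by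
    intro d
    induction d with
    | zero => simp only [Nat.cast_zero, add_zero, sub_zero]; exact hbase
    | succ d ihd =>
      have := step_up _ ihd
      rwa [show k0 + (d:ℤ) + 1 = k0 + ((d+1:ℕ):ℤ) by push_cast; ring] at this
  have hdown : ∀ d : ℕ, Finsupp.single (k0 - (d:ℤ)) (1:ℂ) ∈ W := by
    intro d
    induction d with
    | zero => simp only [Nat.cast_zero, add_zero, sub_zero]; exact hbase
    | succ d ihd =>
      have := step_down _ ihd
      rwa [show k0 - (d:ℤ) - 1 = k0 - ((d+1:ℕ):ℤ) by push_cast; ring] at this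
  have hall : ∀ j : ℤ, Finsupp.single j (1:ℂ) ∈ W := by
    intro j
    rcases le_or_gt k0 j with hle | hlt
    · have := hup (j - k0).toNat
      rwa [show k0 + ((j - k0).toNat : ℤ) = j by omega] at this
    · have := hdown (k0 - j).toNat
      rwa [show k0 - ((k0 - j).toNat : ℤ) = j by omega] at this
  rw [eq_top_iff]
  intro v _
  have hv : v = ∑ k ∈ v.support, Finsupp.single k (v k) := (Finsupp.sum_single v).symm
  rw [hv]
  refine Submodule.sum_mem W fun k _ => ?_
  have := W.smul_mem (v k) (hall k)
  rwa [Finsupp.smul_single, smul_eq_mul, mul_one] at this
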